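/- Let (𝔛, τ) be a Hausdorff topological vector space admitting a sequence of continuous (not necessarily linear) operators T_N : 𝔛 → 𝔛 such that T_N(𝔛) is contained in an N-dimensional linear subspace 𝔛_N and T_N(x) → x as N → ∞ for every x ∈ 𝔛. Then 𝔛 is quasi-Polish: choosing linear isomorphisms Φ_N : 𝔛_N → ℝ^N, the countable family {Φ_N^{(i)} ∘ T_N ; N ∈ ℕ, 1 ≤ i ≤ N} of continuous real-valued functions separates points. -/

import Mathlib

open scoped Topology

/-- A Hausdorff topological vector space admitting continuous (not necessarily
linear) finite-rank operators `T N` converging pointwise to the identity is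
quasi-Polish: composing with coordinates of linear isomorphisms
`Φ N : 𝔛_N ≃ ℝ^N`, one obtains a countable separating family of continuous
real-valued functions. -/
theorem approxIdentity_quasiPolish {X : Type*} [AddCommGroup X] [Module ℝ X]
    [TopologicalSpace X] [T2Space X] [IsTopologicalAddGroup X] [ContinuousSMul ℝ X]
    (V : ℕ → Submodule ℝ X) (hdim : ∀ N, Module.finrank ℝ (V N) = N)
    (T : ℕ → X → X) (hTcont : ∀ N, Continuous (T N))
    (hTmem : ∀ N x, T N x ∈ V N)
    (hTlim : ∀ x : X, Filter.Tendsto (fun N => T N x) Filter.atTop (𝓝 x))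
    (Φ : ∀ N, V N ≃ₗ[ℝ] (Fin N → ℝ)) :
    (∀ N (i : Fin N), Continuous (fun x : X => Φ N ⟨T N x, hTmem N x⟩ i)) ∧
      ∀ x y : X, x ≠ y →
        ∃ N, ∃ i : Fin N, Φ N ⟨T N x, hTmem N x⟩ i ≠ Φ N ⟨T N y, hTmem N y⟩ i := by
  have hfd : ∀ N, FiniteDimensional ℝ (V N) := fun N =>
    LinearEquiv.finiteDimensional (Φ N).symm
  constructor
  · intro N i
    have hcΦ : Continuous (Φ N) := by
      haveI := hfd N
      exact LinearMap.continuous_of_finiteDimensional ((Φ N) : V N →ₗ[ℝ] (Fin N → ℝ))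
    have : Continuous (fun x : X => (⟨T N x, hTmem N x⟩ : V N)) :=
      Continuous.subtype_mk (hTcont N) _
    exact (continuous_apply i).comp (hcΦ.comp this)
  · intro x y hxy
    have : ∀ᶠ N in Filter.atTop, T N x ≠ T N y := by
      obtain ⟨u, v, hu, hv, hxu, hyv, huv⟩ := t2_separation hxy
      filter_upwards [(hTlim x).eventually_mem (hu.mem_nhds hxu),
        (hTlim y).eventually_mem (hv.mem_nhds hyv)] with N h1 h2
      intro h
      exact (Set.disjoint_left.mp huv h1) (h ▸ h2)
    obtain ⟨N, hN⟩ := this.exists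
    have hne : (⟨T N x, hTmem N x⟩ : V N) ≠ ⟨T N y, hTmem N y⟩ := by
      simp [Subtype.ext_iff, hN]
    have : Φ N ⟨T N x, hTmem N x⟩ ≠ Φ N ⟨T N y, hTmem N y⟩ :=
      fun h => hne ((Φ N).injective h)
    obtain ⟨i, hi⟩ := Function.ne_iff.mp this
    exact ⟨N, i, hi⟩
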